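/- Let a ∈ ℝ with a ≠ 0, γ ∈ ℝ, and β₄₃ ≠ 0, β₆₄ + β₆₅ ≠ 0. If real numbers r₁,…,r₆ satisfy the six equations: (i) r₁+r₂+r₃+r₄+(γ+1)r₅+r₆ = 1; (ii) r₂+r₃+γr₅ = 1; (iii) a(r₂+2r₃+(3γ+1)r₅) = 1/2; (iv) a(r₂+2r₃+3γr₅) = 1/2; (v) β₄₃(r₄+r₅) + (a+β₆₃+β₆₄+(γ+1)β₆₅)r₆ = 1/2; (vi) β₄₃(r₄+r₅) + (a+β₆₃+γβ₆₅)r₆ = 1/2, then r₅ = 0, r₆ = 0, r₂ = (4a−1)/(2a), r₃ = (1−2a)/(2a), r₄ = 1/(2β₄₃), r₁ = −1/(2β₄₃). -/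
import Mathlib

theorem embedded_method_unique (a γ β₄₃ β₆₃ β₆₄ β₆₅ : ℝ)
    (ha0 : a ≠ 0) (hb43 : β₄₃ ≠ 0) (hb : β₆₄ + β₆₅ ≠ 0)
    (r₁ r₂ r₃ r₄ r₅ r₆ : ℝ)
    (h1 : r₁ + r₂ + r₃ + r₄ + (γ+1)*r₅ + r₆ = 1)
    (h2 : r₂ + r₃ + γ*r₅ = 1)
    (h3 : a*(r₂ + 2*r₃ + (3*γ+1)*r₅) = 1/2)
    (h4 : a*(r₂ + 2*r₃ + 3*γ*r₅) = 1/2)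
    (h5 : β₄₃*(r₄ + r₅) + (a + β₆₃ + β₆₄ + (γ+1)*β₆₅)*r₆ = 1/2)
    (h6 : β₄₃*(r₄ + r₅) + (a + β₆₃ + γ*β₆₅)*r₆ = 1/2) :
    r₅ = 0 ∧ r₆ = 0 ∧ r₂ = (4*a-1)/(2*a) ∧ r₃ = (1-2*a)/(2*a) ∧
      r₄ = 1/(2*β₄₃) ∧ r₁ = -1/(2*β₄₃) := by
  have hr5 : r₅ = 0 := by
    have : a * r₅ = 0 := by linarith [h3, h4]
    exact (mul_eq_zero.mp this).resolve_left ha0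
  subst hr5
  have hr6 : r₆ = 0 := by
    have : (β₆₄ + β₆₅) * r₆ = 0 := by ring_nf; ring_nf at h5 h6; linarith
    exact (mul_eq_zero.mp this).resolve_left hb
  subst hr6
  have hr4 : r₄ = 1/(2*β₄₃) := by
    field_simp at h5 ⊢; linarith
  have hr3 : r₃ = (1-2*a)/(2*a) := by
    field_simp at h4 ⊢; linear_combination h4 - 2*a*h2
  have hr2 : r₂ = (4*a-1)/(2*a) := by
    field_simp at h4 ⊢; linear_combination -h4 + 4*a*h2
  refine ⟨rfl, rfl, hr2, hr3, hr4, ?_⟩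
  have : r₁ = 1 - r₂ - r₃ - r₄ := by linarith
  rw [this, hr2, hr3, hr4]; field_simp; ring
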